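/- Let Y be a random variable supported on [−1, 1] with E(Y) = 0 satisfying P(Y > 1 − 1/t) ≫ exp(−c e^{√t}) for all t ≥ 1. Define f(t) = log E(e^{tY}) for 0 < t < 1 and f(t) = log E(e^{tY}) − t for t > 1. Then f is differentiable on (0,∞)\{1} with f′(t) ≪ t for 0 < t < 1 and f′(t) ≪ 1/(log 2t)^2 for t > 1. -/

import Mathlib

open Real MeasureTheory

section auxx
variable {Ω : Type*} [MeasurableSpace Ω] (μ : Measure Ω) [IsProbabilityMeasure μ]
  (Y : Ω → ℝ)


lemma aux_int (hYmeas : Measurable Y) (hYb : ∀ ω, |Y ω| ≤ 1) (t : ℝ) :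
    Integrable (fun ω => Real.exp (t * Y ω)) μ := by
  apply Integrable.mono' (integrable_const (Real.exp |t|))
  · exact (Real.measurable_exp.comp (measurable_const.mul hYmeas)).aestronglyMeasurable
  · refine Filter.Eventually.of_forall fun ω => ?_
    rw [Real.norm_eq_abs, abs_of_pos (Real.exp_pos _)]
    apply Real.exp_le_exp.2
    calc t * Y ω ≤ |t * Y ω| := le_abs_self _
      _ = |t| * |Y ω| := abs_mul _ _
      _ ≤ |t| * 1 := by
          exact mul_le_mul_of_nonneg_left (hYb ω) (abs_nonneg t)
      _ = |t| := mul_one _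

lemma aux_intD (hYmeas : Measurable Y) (hYb : ∀ ω, |Y ω| ≤ 1) (t : ℝ) :
    Integrable (fun ω => Y ω * Real.exp (t * Y ω)) μ := by
  apply Integrable.mono' (integrable_const (Real.exp |t|))
  · exact (hYmeas.mul (Real.measurable_exp.comp (measurable_const.mul hYmeas))).aestronglyMeasurable
  · refine Filter.Eventually.of_forall fun ω => ?_
    rw [Real.norm_eq_abs, abs_mul, abs_of_pos (Real.exp_pos _)]
    calc |Y ω| * Real.exp (t * Y ω) ≤ 1 * Real.exp (t * Y ω) :=
          mul_le_mul_of_nonneg_right (hYb ω) (Real.exp_pos _).le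
      _ = Real.exp (t * Y ω) := one_mul _
      _ ≤ Real.exp |t| := by
          apply Real.exp_le_exp.2
          calc t * Y ω ≤ |t * Y ω| := le_abs_self _
            _ = |t| * |Y ω| := abs_mul _ _
            _ ≤ |t| * 1 := mul_le_mul_of_nonneg_left (hYb ω) (abs_nonneg t)
            _ = |t| := mul_one _

lemma aux_intY (hYmeas : Measurable Y) (hYb : ∀ ω, |Y ω| ≤ 1) :
    Integrable Y μ := by
  apply Integrable.mono' (integrable_const 1)
  · exact hYmeas.aestronglyMeasurable
  · exact Filter.Eventually.of_forall fun ω => by rw [Real.norm_eq_abs]; exact hYb ω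

lemma aux_deriv (hYmeas : Measurable Y) (hYb : ∀ ω, |Y ω| ≤ 1) (t : ℝ) :
    HasDerivAt (fun s => ∫ ω, Real.exp (s * Y ω) ∂μ)
      (∫ ω, Y ω * Real.exp (t * Y ω) ∂μ) t := by
  have h := hasDerivAt_integral_of_dominated_loc_of_deriv_le
    (F := fun s ω => Real.exp (s * Y ω))
    (F' := fun s ω => Y ω * Real.exp (s * Y ω)) (x₀ := t)
    (bound := fun _ => Real.exp (|t| + 1)) (s := Metric.ball t 1) (μ := μ) (Metric.ball_mem_nhds t one_pos)
    (Filter.Eventually.of_forall fun s =>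
      (Real.measurable_exp.comp (measurable_const.mul hYmeas)).aestronglyMeasurable)
    (aux_int μ Y hYmeas hYb t)
    ((hYmeas.mul (Real.measurable_exp.comp (measurable_const.mul hYmeas))).aestronglyMeasurable)
    ?_ (integrable_const _) ?_
  · exact h.2
  · refine Filter.Eventually.of_forall fun ω => fun s hs => ?_
    have hst : |s| ≤ |t| + 1 := by
      have : dist s t < 1 := Metric.mem_ball.1 hs
      rw [Real.dist_eq] at this
      calc |s| = |(s - t) + t| := by ring_nf
        _ ≤ |s - t| + |t| := abs_add_le _ _
        _ ≤ |t| + 1 := by linarith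
    rw [Real.norm_eq_abs, abs_mul, abs_of_pos (Real.exp_pos _)]
    calc |Y ω| * Real.exp (s * Y ω) ≤ 1 * Real.exp (s * Y ω) :=
          mul_le_mul_of_nonneg_right (hYb ω) (Real.exp_pos _).le
      _ = Real.exp (s * Y ω) := one_mul _
      _ ≤ Real.exp (|t| + 1) := by
          apply Real.exp_le_exp.2
          calc s * Y ω ≤ |s * Y ω| := le_abs_self _
            _ = |s| * |Y ω| := abs_mul _ _
            _ ≤ (|t| + 1) * 1 :=
                mul_le_mul hst (hYb ω) (abs_nonneg _) (by positivity)
            _ = |t| + 1 := mul_one _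
  · refine Filter.Eventually.of_forall fun ω => fun s _ => ?_
    have h1 : HasDerivAt (fun x : ℝ => x * Y ω) (Y ω) s := by
      simpa using (hasDerivAt_id s).mul_const (Y ω)
    have h2 := h1.exp
    simpa [mul_comm] using h2

end auxx

set_option maxHeartbeats 2000000 in
theorem stmt_8 {Ω : Type*} [MeasurableSpace Ω] (μ : Measure Ω) [IsProbabilityMeasure μ]
    (Y : Ω → ℝ) (hYmeas : Measurable Y) (hYbdd : ∀ ω, Y ω ∈ Set.Icc (-1 : ℝ) 1)
    (hYmean : ∫ ω, Y ω ∂μ = 0)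
    (c κ : ℝ) (hc : 0 < c) (hκ : 0 < κ)
    (hYlow : ∀ t : ℝ, 1 ≤ t →
      κ * Real.exp (-c * Real.exp (Real.sqrt t)) ≤ (μ {ω | 1 - 1 / t < Y ω}).toReal)
    (f : ℝ → ℝ)
    (hf : ∀ t : ℝ, 0 < t →
      f t = if t < 1 then Real.log (∫ ω, Real.exp (t * Y ω) ∂μ)
            else Real.log (∫ ω, Real.exp (t * Y ω) ∂μ) - t) :
    (∀ t ∈ Set.Ioi (0 : ℝ) \ {1}, DifferentiableAt ℝ f t) ∧
    ∃ C > 0,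
      (∀ t : ℝ, 0 < t → t < 1 → |deriv f t| ≤ C * t) ∧
      (∀ t : ℝ, 1 < t → |deriv f t| ≤ C / (Real.log (2 * t)) ^ 2) := by
  have hYb : ∀ ω, |Y ω| ≤ 1 := fun ω => abs_le.2 ⟨(hYbdd ω).1, (hYbdd ω).2⟩
  -- one ≤ M t
  have hM1 : ∀ t : ℝ, 1 ≤ ∫ ω, Real.exp (t * Y ω) ∂μ := by
    intro t
    have h0 : ∫ ω, (1 + t * Y ω) ∂μ = 1 := by
      rw [integral_add (integrable_const 1) ((aux_intY μ Y hYmeas hYb).const_mul t)]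
      rw [integral_const_mul, hYmean]
      simp
    calc (1:ℝ) = ∫ ω, (1 + t * Y ω) ∂μ := h0.symm
      _ ≤ ∫ ω, Real.exp (t * Y ω) ∂μ := by
          apply integral_mono ((integrable_const 1).add ((aux_intY μ Y hYmeas hYb).const_mul t))
            (aux_int μ Y hYmeas hYb t)
          intro ω
          have := Real.add_one_le_exp (t * Y ω)
          simp only [Pi.add_apply]
          linarith
  have hMpos : ∀ t : ℝ, 0 < ∫ ω, Real.exp (t * Y ω) ∂μ := fun t => lt_of_lt_of_le one_pos (hM1 t)
  -- derivative of f on (0,1)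
  have hdlt : ∀ t : ℝ, 0 < t → t < 1 → HasDerivAt f
      ((∫ ω, Y ω * Real.exp (t * Y ω) ∂μ) / (∫ ω, Real.exp (t * Y ω) ∂μ)) t := by
    intro t ht0 ht1
    have hd := (aux_deriv μ Y hYmeas hYb t).log (hMpos t).ne'
    apply hd.congr_of_eventuallyEq
    filter_upwards [Ioo_mem_nhds ht0 ht1] with s hs
    rw [hf s hs.1, if_pos hs.2]
  have hdgt : ∀ t : ℝ, 1 < t → HasDerivAt f
      ((∫ ω, Y ω * Real.exp (t * Y ω) ∂μ) / (∫ ω, Real.exp (t * Y ω) ∂μ) - 1) t := by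
    intro t ht1
    have hd := ((aux_deriv μ Y hYmeas hYb t).log (hMpos t).ne').sub (hasDerivAt_id t)
    apply hd.congr_of_eventuallyEq
    filter_upwards [Ioi_mem_nhds ht1] with s hs
    rw [hf s (lt_trans one_pos hs), if_neg (not_lt.2 hs.le)]
    rfl
  constructor
  · rintro t ⟨ht0, ht1⟩
    simp only [Set.mem_Ioi] at ht0
    simp only [Set.mem_singleton_iff] at ht1
    rcases lt_or_gt_of_ne ht1 with h | h
    · exact (hdlt t ht0 h).differentiableAt
    · exact (hdgt t h).differentiableAt
  · set T₀ : ℝ := (11*(c+1))^4 with hT₀def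
    set C : ℝ := 18 + 1024/κ + 2*(Real.log (2*T₀))^2 with hCdef
    have hT₀big : (14641:ℝ) ≤ T₀ := by
      have hc1 : (1:ℝ) ≤ c + 1 := by linarith
      have h4 : (1:ℝ) ≤ (c+1)^4 := one_le_pow₀ hc1
      calc (14641:ℝ) = 14641 * 1 := by norm_num
        _ ≤ 14641 * (c+1)^4 := by linarith
        _ = T₀ := by rw [hT₀def]; ring
    have hlogT₀ : (0:ℝ) ≤ Real.log (2*T₀) := by
      apply Real.log_nonneg; linarith
    have hCpos : 0 < C := by
      rw [hCdef]
      have h0 : 0 < 1024/κ := by positivity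
      linarith only [h0, sq_nonneg (Real.log (2*T₀))]
    refine ⟨C, hCpos, ?_, ?_⟩
    · -- small t
      intro t ht0 ht1
      rw [(hdlt t ht0 ht1).deriv]
      set Mt := ∫ ω, Real.exp (t * Y ω) ∂μ with hMt
      set Dt := ∫ ω, Y ω * Real.exp (t * Y ω) ∂μ with hDt
      have hDb : |Dt| ≤ 2*t := by
        have hDeq : Dt = ∫ ω, Y ω * (Real.exp (t * Y ω) - 1) ∂μ := by
          rw [hDt, show (fun ω => Y ω * (Real.exp (t * Y ω) - 1))
              = fun ω => Y ω * Real.exp (t * Y ω) - Y ω from funext fun ω => by ring,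
            integral_sub (aux_intD μ Y hYmeas hYb t) (aux_intY μ Y hYmeas hYb), hYmean, sub_zero]
        rw [hDeq]
        have hb := norm_integral_le_of_norm_le (μ := μ)
          (f := fun ω => Y ω * (Real.exp (t * Y ω) - 1)) (integrable_const (2*t))
          (Filter.Eventually.of_forall fun ω => ?_)
        · rw [Real.norm_eq_abs] at hb
          simpa using hb
        · rw [Real.norm_eq_abs, abs_mul]
          have h1 : |t * Y ω| ≤ 1 := by
            rw [abs_mul, abs_of_pos ht0]
            calc t * |Y ω| ≤ t * 1 := mul_le_mul_of_nonneg_left (hYb ω) ht0.le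
              _ ≤ 1 := by linarith
          have h2 : |Real.exp (t * Y ω) - 1| ≤ 2 * |t * Y ω| := Real.abs_exp_sub_one_le h1
          have h3 : |t * Y ω| ≤ t := by
            rw [abs_mul, abs_of_pos ht0]
            calc t * |Y ω| ≤ t * 1 := mul_le_mul_of_nonneg_left (hYb ω) ht0.le
              _ = t := mul_one _
          calc |Y ω| * |Real.exp (t * Y ω) - 1| ≤ 1 * |Real.exp (t * Y ω) - 1| :=
                mul_le_mul_of_nonneg_right (hYb ω) (abs_nonneg _)
            _ = |Real.exp (t * Y ω) - 1| := one_mul _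
            _ ≤ 2 * |t * Y ω| := h2
            _ ≤ 2 * t := by linarith
      have hMposa : 0 < Mt := hMpos t
      calc |Dt / Mt| = |Dt| / |Mt| := abs_div _ _
        _ = |Dt| / Mt := by rw [abs_of_pos hMposa]
        _ ≤ |Dt| := div_le_self (abs_nonneg _) (hM1 t)
        _ ≤ 2*t := hDb
        _ ≤ C*t := by
            apply mul_le_mul_of_nonneg_right _ ht0.le
            rw [hCdef]
            have h0 : 0 < 1024/κ := by positivity
            linarith only [h0, sq_nonneg (Real.log (2*T₀))]
    · -- large t
      intro t ht1
      rw [(hdgt t ht1).deriv]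
      set Mt := ∫ ω, Real.exp (t * Y ω) ∂μ with hMt
      set Dt := ∫ ω, Y ω * Real.exp (t * Y ω) ∂μ with hDt
      have ht0 : (0:ℝ) < t := by linarith
      set L : ℝ := Real.log (2*t) with hLdef
      have hLpos : 0 < L := Real.log_pos (by linarith)
      have hMposa : 0 < Mt := hMpos t
      have hDleM : Dt ≤ Mt := by
        apply integral_mono (aux_intD μ Y hYmeas hYb t) (aux_int μ Y hYmeas hYb t)
        intro ω
        exact mul_le_of_le_one_left (Real.exp_pos _).le (hYbdd ω).2
      have hDgeM : -Mt ≤ Dt := by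
        have : ∫ ω, -Real.exp (t * Y ω) ∂μ ≤ Dt := by
          apply integral_mono ((aux_int μ Y hYmeas hYb t).neg) (aux_intD μ Y hYmeas hYb t)
          intro ω
          have := mul_le_mul_of_nonneg_right (hYbdd ω).1 (Real.exp_pos (t * Y ω)).le
          simpa using this
        rwa [integral_neg] at this
      have hratio1 : Dt / Mt ≤ 1 := (div_le_one hMposa).2 hDleM
      have habs : |Dt / Mt - 1| = 1 - Dt / Mt := by
        rw [abs_of_nonpos (by linarith only [hratio1])]; ring
      rw [habs]
      by_cases hT : T₀ ≤ t
      ·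
        -- main asymptotic regime
        have hta : (14641:ℝ) ≤ t := le_trans hT₀big hT
        have h2tpos : (0:ℝ) < 2*t := by linarith only [hta]
        obtain ⟨v, hv0, hv1, hv8, hlogv⟩ :
            ∃ v : ℝ, 0 < v ∧ 1 ≤ v ∧ v^8 = 2*t ∧ Real.log v = L/8 := by
          refine ⟨(2*t) ^ ((1:ℝ)/8), Real.rpow_pos_of_pos h2tpos _,
            Real.one_le_rpow (by linarith only [hta]) (by norm_num), ?_, ?_⟩
          · rw [← Real.rpow_natCast ((2*t) ^ ((1:ℝ)/8)) 8, ← Real.rpow_mul h2tpos.le]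
            norm_num
          · rw [Real.log_rpow h2tpos, hLdef]; ring
        have hL2' : 2 ≤ L := by
          rw [hLdef, Real.le_log_iff_exp_le h2tpos]
          have h9 : Real.exp 2 ≤ 9 := by
            rw [show (2:ℝ) = 1+1 by norm_num, Real.exp_add]
            nlinarith [Real.exp_one_lt_d9, (Real.exp_pos 1).le]
          linarith only [h9, hta]
        have hL8v : L ≤ 8*v := by
          have h := Real.log_le_sub_one_of_pos hv0
          rw [hlogv] at h; linarith only [h]
        have hL2v : L^2 ≤ 64*v^2 := by
          calc L^2 ≤ (8*v)^2 := pow_le_pow_left₀ hLpos.le hL8v 2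
            _ = 64*v^2 := by ring
        have hsq2t : Real.sqrt (2*t) = v^4 := by
          rw [show 2*t = (v^4)^2 by rw [← pow_mul]; exact hv8.symm]
          exact Real.sqrt_sq (by positivity)
        have hsqt : Real.sqrt t ≤ v^4 := by
          rw [← hsq2t]; exact Real.sqrt_le_sqrt (by linarith only [ht0])
        have hsqtnn : 0 ≤ Real.sqrt t := Real.sqrt_nonneg t
        have hexphalf : Real.exp (L/2) = v^4 := by
          have hlog4 : Real.log (v^4) = L/2 := by
            rw [Real.log_pow, hlogv]; push_cast; ring
          rw [← hlog4, Real.exp_log (by positivity)]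
        have hM'1 : (1:ℝ) ≤ L^2/4 := by nlinarith only [hL2', sq_nonneg (L-2)]
        have hv2 : 11*(c+1) ≤ v^2 := by
          have h1 : (11*(c+1))^4 ≤ (v^2)^4 := by
            rw [← pow_mul]
            calc (11*(c+1))^4 = T₀ := hT₀def.symm
              _ ≤ t := hT
              _ ≤ 2*t := by linarith only [ht0]
              _ = v^8 := hv8.symm
          exact le_of_pow_le_pow_left₀ (by norm_num) (by positivity) h1
        have hexpo : c * v^4 + Real.sqrt t ≤ 12*t/L^2 := by
          rw [le_div_iff₀ (by positivity : (0:ℝ) < L^2)]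
          have h1 : c*v^4 + Real.sqrt t ≤ (c+1)*v^4 := by linarith only [hsqt]
          calc (c*v^4 + Real.sqrt t)*L^2 ≤ ((c+1)*v^4)*(64*v^2) := by
                apply mul_le_mul h1 hL2v (by positivity) (by positivity)
            _ = (64*(c+1))*v^6 := by ring
            _ ≤ (6*v^2)*v^6 := by
                apply mul_le_mul_of_nonneg_right (by linarith only [hv2, hc]) (by positivity)
            _ = 6*v^8 := by ring
            _ = 12*t := by rw [hv8]; ring
        have hexpneg : Real.exp (-Real.sqrt t) ≤ 4/t := by
          have h2 : 1 + Real.sqrt t/2 ≤ Real.exp (Real.sqrt t / 2) := by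
            linarith only [Real.add_one_le_exp (Real.sqrt t/2)]
          have h3 : Real.exp (Real.sqrt t) = Real.exp (Real.sqrt t/2)^2 := by
            rw [sq, ← Real.exp_add]; ring_nf
          have h4 : Real.sqrt t ^ 2 = t := Real.sq_sqrt (by linarith)
          have h1 : t/4 ≤ Real.exp (Real.sqrt t) := by
            nlinarith only [h2, h3, h4, Real.sqrt_nonneg t]
          rw [Real.exp_neg]
          calc (Real.exp (Real.sqrt t))⁻¹ ≤ (t/4)⁻¹ := by
                apply inv_anti₀ (by linarith only [ht0]) h1
            _ = 4/t := by rw [inv_div]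
        -- probability lower bound for Mt
        set r : ℝ := 1 - 1/(L^2/4) with hrdef
        have hr4 : r = 1 - 4/L^2 := by rw [hrdef, one_div_div]
        have hSmeas : MeasurableSet {ω | r < Y ω} := measurableSet_lt measurable_const hYmeas
        have hprob : κ * Real.exp (-c * v^4) ≤ (μ {ω | r < Y ω}).toReal := by
          have h := hYlow (L^2/4) hM'1
          rw [show Real.sqrt (L^2/4) = L/2 by
              rw [show L^2/4 = (L/2)^2 by ring]; exact Real.sqrt_sq (by linarith only [hLpos]),
            hexphalf, ← hrdef] at h
          exact h
        have hA : Real.exp (t*r) * (κ * Real.exp (-c * v^4)) ≤ Mt := by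
          have hind : ∫ ω, Set.indicator {ω | r < Y ω} (fun _ => Real.exp (t*r)) ω ∂μ
              = Real.exp (t*r) * (μ {ω | r < Y ω}).toReal := by
            rw [integral_indicator_const _ hSmeas, smul_eq_mul, mul_comm]; rfl
          calc Real.exp (t*r) * (κ * Real.exp (-c * v^4))
              ≤ Real.exp (t*r) * (μ {ω | r < Y ω}).toReal := by
                apply mul_le_mul_of_nonneg_left hprob (Real.exp_pos _).le
            _ = ∫ ω, Set.indicator {ω | r < Y ω} (fun _ => Real.exp (t*r)) ω ∂μ := hind.symm
            _ ≤ Mt := by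
                apply integral_mono ((integrable_const _).indicator hSmeas)
                  (aux_int μ Y hYmeas hYb t)
                intro ω
                rw [Set.indicator_apply]
                split_ifs with h
                · exact Real.exp_le_exp.2 (mul_le_mul_of_nonneg_left (le_of_lt h) ht0.le)
                · exact (Real.exp_pos _).le
        -- upper bound for Mt - Dt
        set E2 : ℝ := Real.exp (t*(1 - 16/L^2)) with hE2def
        have hE2pos : 0 < E2 := by rw [hE2def]; positivity
        have hB : Mt - Dt ≤ (16/L^2) * Mt + 2 * E2 := by
          have hLint : ∫ ω, (Real.exp (t * Y ω) - Y ω * Real.exp (t * Y ω)) ∂μ = Mt - Dt :=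
            integral_sub (aux_int μ Y hYmeas hYb t) (aux_intD μ Y hYmeas hYb t)
          have hRint : ∫ ω, ((16/L^2) * Real.exp (t * Y ω) + 2*E2) ∂μ
              = (16/L^2) * Mt + 2*E2 := by
            rw [integral_add ((aux_int μ Y hYmeas hYb t).const_mul _) (integrable_const _),
              integral_const_mul, integral_const]
            simp
            exact Or.inl rfl
          rw [← hLint, ← hRint]
          apply integral_mono ((aux_int μ Y hYmeas hYb t).sub (aux_intD μ Y hYmeas hYb t))
            (((aux_int μ Y hYmeas hYb t).const_mul _).add (integrable_const _))
          intro ω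
          simp only [Pi.sub_apply, Pi.add_apply]
          have hepos := (Real.exp_pos (t * Y ω)).le
          by_cases hω : 1 - 16/L^2 < Y ω
          · have h1 : (1 - Y ω) * Real.exp (t*Y ω) ≤ (16/L^2) * Real.exp (t*Y ω) :=
              mul_le_mul_of_nonneg_right (by linarith only [hω]) hepos
            have h2 : (0:ℝ) ≤ 2*E2 := by positivity
            nlinarith only [h1, h2]
          · push_neg at hω
            have h1 : Real.exp (t * Y ω) ≤ Real.exp (t*(1 - 16/L^2)) :=
              Real.exp_le_exp.2 (mul_le_mul_of_nonneg_left hω ht0.le)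
            have h3 : 1 - Y ω ≤ 2 := by linarith only [(hYbdd ω).1]
            have h2 : (1 - Y ω) * Real.exp (t*Y ω) ≤ 2 * Real.exp (t*(1 - 16/L^2)) :=
              mul_le_mul h3 h1 hepos (by norm_num)
            rw [← hE2def] at h2
            have h4 : (0:ℝ) ≤ (16/L^2) * Real.exp (t * Y ω) := by positivity
            nlinarith only [h2, h4]
        -- combine
        have hMne : Mt ≠ 0 := hMposa.ne'
        set Lo : ℝ := Real.exp (t*r) * (κ * Real.exp (-c * v^4)) with hLodef
        have hLopos : 0 < Lo := by rw [hLodef]; positivity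
        have hkey : E2 ≤ (Real.exp (-Real.sqrt t) / κ) * Lo := by
          have hLo2 : (Real.exp (-Real.sqrt t) / κ) * Lo
              = Real.exp (-Real.sqrt t + t*r + (-c * v^4)) := by
            rw [hLodef, Real.exp_add, Real.exp_add]
            field_simp
          rw [hLo2, hE2def]
          apply Real.exp_le_exp.2
          rw [hr4]
          have e1 : t*(1 - 16/L^2) = t - 16*t/L^2 := by ring
          have e2 : t*(1 - 4/L^2) = t - 4*t/L^2 := by ring
          have e3 : (12:ℝ)*t/L^2 = 16*t/L^2 - 4*t/L^2 := by ring
          linarith only [hexpo, e1, e2, e3]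
        have hEM : E2/Mt ≤ E2/Lo := by
          rw [div_le_div_iff₀ hMposa hLopos]
          exact mul_le_mul_of_nonneg_left hA hE2pos.le
        have hchain : 1 - Dt/Mt ≤ 16/L^2 + 2*E2/Mt := by
          have h1 : (Mt - Dt)/Mt ≤ ((16/L^2)*Mt + 2*E2)/Mt := by
            apply div_le_div_of_nonneg_right hB hMposa.le
          have h2 : (Mt - Dt)/Mt = 1 - Dt/Mt := by
            rw [sub_div, div_self hMne]
          have h3 : ((16/L^2)*Mt + 2*E2)/Mt = 16/L^2 + 2*E2/Mt := by
            rw [add_div, mul_div_assoc, div_self hMne, mul_one]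
          rw [h2, h3] at h1
          exact h1
        have h4 : 2*E2/Mt ≤ 2*(Real.exp (-Real.sqrt t)/κ) := by
          rw [mul_div_assoc]
          apply mul_le_mul_of_nonneg_left _ (by norm_num : (0:ℝ) ≤ 2)
          calc E2/Mt ≤ E2/Lo := hEM
            _ ≤ Real.exp (-Real.sqrt t)/κ := (div_le_iff₀ hLopos).2 hkey
        have h5 : 2*(Real.exp (-Real.sqrt t)/κ) ≤ 2*((4/t)/κ) := by
          apply mul_le_mul_of_nonneg_left _ (by norm_num : (0:ℝ) ≤ 2)
          apply div_le_div_of_nonneg_right hexpneg hκ.le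
        have hL128 : L^2 ≤ 128*t := by
          have hv28 : v^2 ≤ v^8 := pow_le_pow_right₀ hv1 (by norm_num)
          nlinarith only [hL2v, hv8, hv28]
        have h6 : 2*((4/t)/κ) ≤ 1024/κ/L^2 := by
          have he : 2*((4/t)/κ) = 8/(t*κ) := by rw [div_div]; ring
          have he2 : 1024/κ/L^2 = 1024/(κ*L^2) := by rw [div_div]
          rw [he, he2, div_le_div_iff₀ (by positivity) (by positivity)]
          have h8 := mul_le_mul_of_nonneg_left hL128 hκ.le
          nlinarith only [h8]
        have h7 : 16/L^2 + 1024/κ/L^2 ≤ C/L^2 := by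
          rw [← add_div]
          apply div_le_div_of_nonneg_right _ (by positivity : (0:ℝ) ≤ L^2)
          rw [hCdef]
          linarith only [sq_nonneg (Real.log (2*T₀))]
        linarith only [hchain, h4, h5, h6, h7]
      · -- moderate regime
        rw [not_le] at hT
        have hratio2 : -1 ≤ Dt / Mt := by
          rw [neg_le, ← neg_div]
          exact (div_le_one hMposa).2 (by linarith only [hDgeM])
        have hLle : L ≤ Real.log (2*T₀) := by
          rw [hLdef]
          apply Real.log_le_log (by linarith only [ht1])
          linarith only [hT]
        have hL2le : L^2 ≤ (Real.log (2*T₀))^2 := pow_le_pow_left₀ hLpos.le hLle 2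
        rw [le_div_iff₀ (by positivity : (0:ℝ) < L^2)]
        have h2 : 1 - Dt / Mt ≤ 2 := by linarith only [hratio2]
        calc (1 - Dt/Mt) * L^2 ≤ 2 * (Real.log (2*T₀))^2 :=
              mul_le_mul h2 hL2le (by positivity) (by norm_num)
          _ ≤ C := by
              rw [hCdef]
              have h0 : 0 < 1024/κ := by positivity
              linarith only [h0]
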